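/- Let g be the 3-dimensional real Lie algebra with basis {s, d₁, d₂} and brackets [s,d₁] = d₂, [s,d₂] = −d₁, [d₁,d₂] = 0. For the bivector r = a·s∧d₁ + b·s∧d₂ + c·d₁∧d₂, the Schouten bracket satisfies [r,r] = 2(a² + b²)·s∧d₁∧d₂. In particular [r,r] is ad-invariant for all a, b, c. -/

import Mathlib

open ExteriorAlgebra

/-- For the 3-dimensional Lie algebra with basis `{s, d₁, d₂}` and brackets
`[s,d₁] = d₂`, `[s,d₂] = −d₁`, `[d₁,d₂] = 0`, and the bivector
`r = a·s∧d₁ + b·s∧d₂ + c·d₁∧d₂`, the algebraic Schouten bracket satisfies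
`[r,r] = 2(a² + b²)·s∧d₁∧d₂`, and `[r,r]` is ad-invariant for all `a, b, c`. -/
theorem stmt_6 {L : Type*} [LieRing L] [LieAlgebra ℝ L]
    (s d1 d2 : L) (b : Module.Basis (Fin 3) ℝ L)
    (hb0 : b 0 = s) (hb1 : b 1 = d1) (hb2 : b 2 = d2)
    (h1 : ⁅s, d1⁆ = d2) (h2 : ⁅s, d2⁆ = -d1) (h3 : ⁅d1, d2⁆ = 0)
    -- the algebraic Schouten bracket on bivectors
    (S : ExteriorAlgebra ℝ L →ₗ[ℝ] ExteriorAlgebra ℝ L →ₗ[ℝ] ExteriorAlgebra ℝ L)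
    (hS : ∀ x1 x2 y1 y2 : L, S (ι ℝ x1 * ι ℝ x2) (ι ℝ y1 * ι ℝ y2) =
      ι ℝ ⁅x1, y1⁆ * ι ℝ x2 * ι ℝ y2 - ι ℝ ⁅x1, y2⁆ * ι ℝ x2 * ι ℝ y1
        - ι ℝ ⁅x2, y1⁆ * ι ℝ x1 * ι ℝ y2 + ι ℝ ⁅x2, y2⁆ * ι ℝ x1 * ι ℝ y1)
    -- the derivation extension of `ad` to trivectors
    (A3 : L →ₗ[ℝ] ExteriorAlgebra ℝ L →ₗ[ℝ] ExteriorAlgebra ℝ L)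
    (hA3 : ∀ x u v w : L, A3 x (ι ℝ u * ι ℝ v * ι ℝ w) =
      ι ℝ ⁅x, u⁆ * ι ℝ v * ι ℝ w + ι ℝ u * ι ℝ ⁅x, v⁆ * ι ℝ w
        + ι ℝ u * ι ℝ v * ι ℝ ⁅x, w⁆)
    (a c e : ℝ) (r : ExteriorAlgebra ℝ L)
    (hr : r = a • (ι ℝ s * ι ℝ d1) + c • (ι ℝ s * ι ℝ d2) + e • (ι ℝ d1 * ι ℝ d2)) :
    S r r = (2 * (a ^ 2 + c ^ 2)) • (ι ℝ s * ι ℝ d1 * ι ℝ d2) ∧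
      ∀ x : L, A3 x (S r r) = 0 := by
  -- basic sign rules in the exterior algebra
  have hsw : ∀ u v : L, ι ℝ u * ι ℝ v = -(ι ℝ v * ι ℝ u) := fun u v =>
    eq_neg_of_add_eq_zero_left (ι_add_mul_swap u v)
  have sw : ∀ (u v : L) (x : ExteriorAlgebra ℝ L),
      ι ℝ u * (ι ℝ v * x) = -(ι ℝ v * (ι ℝ u * x)) := fun u v x => by
    rw [← mul_assoc, hsw, ← mul_assoc, neg_mul]
  have q : ∀ (u : L) (x : ExteriorAlgebra ℝ L), ι ℝ u * (ι ℝ u * x) = 0 := fun u x => by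
    rw [← mul_assoc, ι_sq_zero, zero_mul]
  -- reversed brackets
  have h1' : ⁅d1, s⁆ = -d2 := by rw [← lie_skew, h1]
  have h2' : ⁅d2, s⁆ = d1 := by rw [← lie_skew, h2, neg_neg]
  have h3' : ⁅d2, d1⁆ = 0 := by rw [← lie_skew, h3, neg_zero]
  have key : S r r = (2 * (a ^ 2 + c ^ 2)) • (ι ℝ s * ι ℝ d1 * ι ℝ d2) := by
    subst hr
    simp only [map_add, map_smul, LinearMap.add_apply, LinearMap.smul_apply, hS,
      h1, h2, h3, h1', h2', h3', lie_self, map_neg, map_zero, zero_mul, neg_mul,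
      mul_neg, neg_neg, sub_zero, zero_sub, sub_neg_eq_add, mul_assoc,
      hsw d1 s, hsw d2 s, hsw d2 d1, sw d1 s, sw d2 s, sw d2 d1, q, ι_sq_zero, mul_zero, neg_zero, smul_zero,
      add_zero, zero_add, smul_neg, smul_add]
    module
  refine ⟨key, fun x => ?_⟩
  rw [key, map_smul]
  obtain ⟨α, β, γ, hx⟩ : ∃ α β γ : ℝ, x = α • s + β • d1 + γ • d2 := by
    refine ⟨b.repr x 0, b.repr x 1, b.repr x 2, ?_⟩
    conv_lhs => rw [← b.sum_repr x]
    rw [Fin.sum_univ_three, hb0, hb1, hb2]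
  rw [hA3]
  rw [show ⁅x, s⁆ = β • (-d2) + γ • d1 by
        rw [hx]; simp [add_lie, smul_lie, h1', h2'],
      show ⁅x, d1⁆ = α • d2 by
        rw [hx]; simp [add_lie, smul_lie, h1, h3'],
      show ⁅x, d2⁆ = α • (-d1) by
        rw [hx]; simp [add_lie, smul_lie, h2, h3]]
  simp only [map_add, map_smul, map_neg, add_mul, mul_add, smul_mul_assoc,
    mul_smul_comm, neg_mul, mul_neg, mul_assoc, hsw d2 d1, sw d2 d1, q, ι_sq_zero,
    mul_zero, zero_mul, neg_zero, smul_zero, add_zero, zero_add, neg_neg]
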